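/- Let C be a reduced connected complete curve of arithmetic genus 0 over an algebraically closed field with n ≥ 3 smooth marked points p_1,…,p_n such that every irreducible component contains a marked point, and choose f_i ∈ H^0(C, O_C(p_i)) with principal part a fixed nonzero tangent vector at p_i. Set α_{ij} = f_i(p_j) for i ≠ j. Then for all distinct i, j, k, l: α_{ik}α_{jk} − α_{ij}α_{jk} − α_{ji}α_{ik} = α_{il}α_{jl} − α_{ij}α_{jl} − α_{ji}α_{il}, and f_i f_j = α_{ij} f_j + α_{ji} f_i + c_{ij} where c_{ij} is the common value α_{ik}α_{jk} − α_{ij}α_{jk} − α_{ji}α_{ik}. -/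
import Mathlib


/-- Let `C` be a reduced connected complete curve of arithmetic genus
`0` over an algebraically closed field `k`, with `n ≥ 3` smooth marked points
`p₁, …, pₙ` such that every irreducible component contains a marked point, and choose
`fᵢ ∈ H⁰(C, O(pᵢ))` with principal part a fixed nonzero tangent vector at `pᵢ`.  Set
`αᵢⱼ = fᵢ(pⱼ)` for `i ≠ j`.  Then for all distinct `i, j, k, l`:
`αᵢₖαⱼₖ − αᵢⱼαⱼₖ − αⱼᵢαᵢₖ = αᵢₗαⱼₗ − αᵢⱼαⱼₗ − αⱼᵢαᵢₗ`, and
`fᵢfⱼ = αᵢⱼfⱼ + αⱼᵢfᵢ + cᵢⱼ` where `cᵢⱼ` is this common value.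

As Mathlib has no cohomology of curves, the geometric situation is encoded through
standard data, following the context:
* `A = H⁰(C ∖ {p₁,…,pₙ}, O)` is a commutative `k`-algebra;
* `L ν = H⁰(C, O(∑ νᵢ pᵢ))` is a filtration of `A` by `k`-subspaces: `L 0 = k·1`
  (arithmetic genus 0, connected, reduced), monotone, with `L(min) = L ∩ L` and
  `L ν · L μ ⊆ L (ν + μ)`, and `dim L ν = 1 + ∑ νᵢ` (`H¹ = 0`);
* `ev j` is evaluation at `pⱼ` (a linear functional on `A`, unital and multiplicative on
  the functions regular at `pⱼ`, i.e. on the `L ν` with `ν j = 0`);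
* `fᵢ ∈ L(pᵢ)` has a genuine pole at `pᵢ` (`fᵢ ∉ L ν` whenever `ν i = 0`), and its
  principal part is the fixed tangent vector: if `x` is regular at `pᵢ` and vanishes
  there (`ev i x = 0`), then `x·fᵢ` is again regular at `pᵢ` with the same poles
  (`x·fᵢ ∈ L ν`). -/
theorem stmt18 {k A : Type*} [Field k] [IsAlgClosed k] [CommRing A] [Algebra k A]
    (n : ℕ) (hn : 3 ≤ n)
    (L : (Fin n → ℕ) → Submodule k A)
    (hL0 : L 0 = Submodule.span k {1})
    (hmono : Monotone L)
    (hinf : ∀ ν μ, L (ν ⊓ μ) = L ν ⊓ L μ)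
    (hmul : ∀ (ν μ : Fin n → ℕ) (x y : A), x ∈ L ν → y ∈ L μ → x * y ∈ L (ν + μ))
    (hrank : ∀ ν, Module.finrank k (L ν) = 1 + ∑ i, ν i)
    (hexh : (⨆ ν, L ν) = ⊤)
    (ev : Fin n → (A →ₗ[k] k))
    (hev1 : ∀ j, ev j 1 = 1)
    (hevmul : ∀ (j : Fin n) (ν μ : Fin n → ℕ), ν j = 0 → μ j = 0 →
      ∀ x ∈ L ν, ∀ y ∈ L μ, ev j (x * y) = ev j x * ev j y)
    (f : Fin n → A)
    (hf : ∀ i, f i ∈ L (Pi.single i 1))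
    (hpole : ∀ (i : Fin n) (ν : Fin n → ℕ), ν i = 0 → f i ∉ L ν)
    (hprin : ∀ (i : Fin n) (ν : Fin n → ℕ), ν i = 0 →
      ∀ x ∈ L ν, ev i x = 0 → x * f i ∈ L ν) :
    (∀ i j kk l : Fin n, i ≠ j → i ≠ kk → i ≠ l → j ≠ kk → j ≠ l → kk ≠ l →
      ev kk (f i) * ev kk (f j) - ev j (f i) * ev kk (f j) - ev i (f j) * ev kk (f i) =
        ev l (f i) * ev l (f j) - ev j (f i) * ev l (f j) - ev i (f j) * ev l (f i)) ∧
    (∀ i j kk : Fin n, i ≠ j → i ≠ kk → j ≠ kk →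
      f i * f j = ev j (f i) • f j + ev i (f j) • f i +
        (ev kk (f i) * ev kk (f j) - ev j (f i) * ev kk (f j) -
          ev i (f j) * ev kk (f i)) • (1 : A)) := by
  -- `g i j := f i * f j - α_{ij} f j - α_{ji} f i` is regular at `p j`
  have aux : ∀ i j : Fin n, i ≠ j →
      f i * f j - ev j (f i) • f j - ev i (f j) • f i ∈ L (Pi.single j 1) := by
    intro i j hij
    have h1 : (1 : A) ∈ L (Pi.single j 1) := by
      refine hmono (show (0 : Fin n → ℕ) ≤ Pi.single j 1 from fun m => Nat.zero_le _) ?_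
      rw [hL0]; exact Submodule.mem_span_singleton_self 1
    have hx : f j - ev i (f j) • 1 ∈ L (Pi.single j 1) :=
      Submodule.sub_mem _ (hf j) (Submodule.smul_mem _ _ h1)
    have hji0 : (Pi.single j 1 : Fin n → ℕ) i = 0 := by
      simp [Pi.single_apply, hij]
    have hev0 : ev i (f j - ev i (f j) • 1) = 0 := by
      simp [map_sub, map_smul, hev1 i, smul_eq_mul]
    have hxi := hprin i (Pi.single j 1) hji0 _ hx hev0
    have h2 := Submodule.sub_mem _ hxi
      (Submodule.smul_mem _ (ev j (f i)) (hf j))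
    have e : (f j - ev i (f j) • 1) * f i - ev j (f i) • f j
        = f i * f j - ev j (f i) • f j - ev i (f j) • f i := by
      rw [sub_mul, smul_mul_assoc, one_mul, mul_comm, sub_right_comm]
    rwa [e] at h2
  -- hence it lies in `L 0 = k·1`, with constant computed by evaluating anywhere
  have main : ∀ i j : Fin n, i ≠ j → ∃ c : k,
      f i * f j = ev j (f i) • f j + ev i (f j) • f i + c • 1 ∧
      ∀ kk, kk ≠ i → kk ≠ j →
        c = ev kk (f i) * ev kk (f j) - ev j (f i) * ev kk (f j)
            - ev i (f j) * ev kk (f i) := by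
    intro i j hij
    have hgj := aux i j hij
    have hgi : f i * f j - ev j (f i) • f j - ev i (f j) • f i
        ∈ L (Pi.single i 1) := by
      have := aux j i hij.symm
      have e : f j * f i - ev i (f j) • f i - ev j (f i) • f j
          = f i * f j - ev j (f i) • f j - ev i (f j) • f i := by
        rw [mul_comm, sub_right_comm]
      rwa [e] at this
    have hzero : (Pi.single i 1 ⊓ Pi.single j 1 : Fin n → ℕ) = 0 := by
      funext m
      by_cases hmi : m = i <;> by_cases hmj : m = j <;>
        simp_all [Pi.single_apply, hij]
    have hg0 : f i * f j - ev j (f i) • f j - ev i (f j) • f i ∈ L 0 := by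
      rw [← hzero, hinf]; exact ⟨hgi, hgj⟩
    rw [hL0, Submodule.mem_span_singleton] at hg0
    obtain ⟨c, hc⟩ := hg0
    refine ⟨c, by rw [hc]; abel, ?_⟩
    intro kk hki hkj
    have hik0 : (Pi.single i 1 : Fin n → ℕ) kk = 0 := by
      simp [Pi.single_apply, hki.symm]
    have hjk0 : (Pi.single j 1 : Fin n → ℕ) kk = 0 := by
      simp [Pi.single_apply, hkj.symm]
    have hmulk := hevmul kk _ _ hik0 hjk0 (f i) (hf i) (f j) (hf j)
    have := congrArg (ev kk) hc
    simp only [map_sub, map_smul, hev1 kk, smul_eq_mul, mul_one, hmulk] at this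
    exact this
  refine ⟨?_, ?_⟩
  · intro i j kk l hij hik hil hjk hjl hkl
    obtain ⟨c, -, hval⟩ := main i j hij
    rw [← hval kk hik.symm hjk.symm, ← hval l hil.symm hjl.symm]
  · intro i j kk hij hik hjk
    obtain ⟨c, heq, hval⟩ := main i j hij
    rw [heq, hval kk hik.symm hjk.symm]
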